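/- arXiv:2012.03235 — 2 statements merged into one kernel-verified Lean document; each statement's English description precedes it below -/
import Mathlib

section
/- In the block construction, writing p_j = N_j/|F| for the probability that a uniformly random member of F contains exactly j blocks, and τ = m · 2^{−s}, we have p_j ≤ τ^{j−1} · p_1 for all j ∈ [m]. -/
open Finset

/-- A family of finite sets is union-closed if it contains the union of any two of
its members. -/
def UnionClosed {α : Type*} [DecidableEq α] (F : Finset (Finset α)) : Prop :=
  ∀ A ∈ F, ∀ B ∈ F, A ∪ B ∈ F

/-- The abundance of `x` with respect to a family `F`. -/
noncomputable def abundance {α : Type*} [DecidableEq α] (F : Finset (Finset α)) (x : α) : ℝ :=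
  ((F.filter (fun A => x ∈ A)).card : ℝ) / (F.card : ℝ)

/-- The average overlap density of `F`. -/
noncomputable def AOD {α : Type*} [DecidableEq α] (F : Finset (Finset α)) : ℝ :=
  (1 / (((F.erase ∅).card : ℝ))) *
    ∑ A ∈ F.erase ∅, (1 / (A.card : ℝ)) * ∑ x ∈ A, abundance F x

/-- The union-closed family generated by `G = {B i ∪ {j} : i, j ∈ T}`:
all unions of nonempty subcollections of `G`. -/
def blockFamily {n m : ℕ} (B : Fin m → Finset (Fin n)) (T : Finset (Fin n)) :
    Finset (Finset (Fin n)) :=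
  ((((univ : Finset (Fin m)) ×ˢ T).image (fun p => B p.1 ∪ {p.2})).powerset.filter
      (fun C => C.Nonempty)).image (fun C => C.sup id)

lemma mem_blockFamily_iff {n m : ℕ} (B : Fin m → Finset (Fin n)) (T : Finset (Fin n))
    (A : Finset (Fin n)) :
    A ∈ blockFamily B T ↔ ∃ D ⊆ (univ : Finset (Fin m)) ×ˢ T, D.Nonempty ∧
      A = D.sup (fun p => B p.1 ∪ {p.2}) := by
  simp only [blockFamily, mem_image, mem_filter, mem_powerset]
  constructor
  · rintro ⟨C, ⟨hCsub, hCne⟩, rfl⟩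
    refine ⟨(univ ×ˢ T).filter (fun p => B p.1 ∪ {p.2} ∈ C), filter_subset _ _, ?_, ?_⟩
    · obtain ⟨c, hc⟩ := hCne
      obtain ⟨p, hp, hpc⟩ := mem_image.mp (hCsub hc)
      exact ⟨p, mem_filter.mpr ⟨hp, by rw [hpc]; exact hc⟩⟩
    · apply le_antisymm
      · refine Finset.sup_le fun c hc => ?_
        obtain ⟨p, hp, hpc⟩ := mem_image.mp (hCsub hc)
        have hpm : p ∈ (univ ×ˢ T).filter (fun p => B p.1 ∪ {p.2} ∈ C) :=
          mem_filter.mpr ⟨hp, by rw [hpc]; exact hc⟩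
        calc (id c : Finset (Fin n)) = B p.1 ∪ {p.2} := hpc.symm
        _ ≤ _ := Finset.le_sup (f := fun p : Fin m × Fin n => B p.1 ∪ {p.2}) hpm
      · exact Finset.sup_le fun p hp => Finset.le_sup (f := id) (mem_filter.mp hp).2
  · rintro ⟨D, hD, hDne, rfl⟩
    refine ⟨D.image (fun p => B p.1 ∪ {p.2}), ⟨image_subset_image hD, hDne.image _⟩, ?_⟩
    rw [Finset.sup_image]
    rfl

section Main
variable {n m s : ℕ} (B : Fin m → Finset (Fin n)) (T : Fin m → Finset (Fin n))

lemma mem_blockFamily_iff' (hs : 0 < s)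
    (hT : ∀ i, T i ⊆ B i) (hTcard : ∀ i, (T i).card = s) (A : Finset (Fin n)) :
    A ∈ blockFamily B ((univ : Finset (Fin m)).biUnion T) ↔
      ∃ S : Finset (Fin m), S.Nonempty ∧
        ∃ Y ⊆ ((univ : Finset (Fin m)).biUnion T) \ S.sup B, A = S.sup B ∪ Y := by
  set T' := (univ : Finset (Fin m)).biUnion T with hT'
  rw [mem_blockFamily_iff]
  constructor
  · rintro ⟨D, hD, hDne, rfl⟩
    set f : Fin m × Fin n → Finset (Fin n) := fun p => B p.1 ∪ {p.2} with hf
    set A := D.sup f with hA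
    set S := D.image Prod.fst with hS
    have hSB : S.sup B ⊆ A := by
      show S.sup B ≤ A
      refine Finset.sup_le fun i hi => ?_
      show B i ≤ A
      obtain ⟨p, hp, rfl⟩ := mem_image.mp hi
      calc B p.1 ≤ f p := subset_union_left
      _ ≤ A := Finset.le_sup (f := f) hp
    have hAT : A ⊆ S.sup B ∪ T' := by
      show A ≤ S.sup B ∪ T'
      refine Finset.sup_le fun p hp => ?_
      show f p ⊆ S.sup B ∪ T'
      apply union_subset_union
      · exact Finset.le_sup (f := B) (mem_image_of_mem Prod.fst hp)
      · simpa using (mem_product.mp (hD hp)).2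
    refine ⟨S, hDne.image _, A \ S.sup B, ?_, ?_⟩
    · intro x hx
      rw [mem_sdiff] at hx ⊢
      rcases mem_union.mp (hAT hx.1) with h | h
      · exact absurd h hx.2
      · exact ⟨h, hx.2⟩
    · rw [Finset.union_sdiff_of_subset hSB]
  · rintro ⟨S, hSne, Y, hY, rfl⟩
    have hTne : ∀ i, ∃ t, t ∈ T i := fun i =>
      Finset.card_pos.mp (by rw [hTcard]; exact hs) |>.exists_mem
    choose t ht using hTne
    obtain ⟨i0, hi0⟩ := hSne
    set f : Fin m × Fin n → Finset (Fin n) := fun p => B p.1 ∪ {p.2} with hf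
    set D := S.image (fun i => (i, t i)) ∪ Y.image (fun y => (i0, y)) with hD
    refine ⟨D, ?_, ?_, ?_⟩
    · apply union_subset
      · intro q hq
        obtain ⟨i, hi, rfl⟩ := mem_image.mp hq
        exact mem_product.mpr ⟨mem_univ _, mem_biUnion.mpr ⟨i, mem_univ _, ht i⟩⟩
      · intro q hq
        obtain ⟨y, hy, rfl⟩ := mem_image.mp hq
        exact mem_product.mpr ⟨mem_univ _, (mem_sdiff.mp (hY hy)).1⟩
    · exact Finset.Nonempty.inl (Finset.Nonempty.image ⟨i0, hi0⟩ _)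
    · apply le_antisymm
      · apply union_subset
        · show S.sup B ≤ _
          refine Finset.sup_le fun i hi => ?_
          show B i ≤ _
          have h2 : f (i, t i) ≤ D.sup f := Finset.le_sup (f := f)
            (mem_union_left _ (mem_image_of_mem (fun i => (i, t i)) hi))
          exact le_trans le_sup_left h2
        · intro y hy
          have h2 : f (i0, y) ≤ D.sup f := Finset.le_sup (f := f)
            (mem_union_right _ (mem_image_of_mem (fun y => (i0, y)) hy))
          exact h2 (by simp [hf])
      · show Finset.sup _ f ≤ S.sup B ∪ Y
        refine Finset.sup_le fun q hq => ?_
        show f q ⊆ S.sup B ∪ Y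
        rcases mem_union.mp hq with h | h
        · obtain ⟨i, hi, rfl⟩ := mem_image.mp h
          have h1 : B i ⊆ S.sup B := Finset.le_sup hi
          have h2 : t i ∈ B i := hT i (ht i)
          simp only [hf]
          apply union_subset (h1.trans subset_union_left)
          simpa using subset_union_left (h1 h2)
        · obtain ⟨y, hy, rfl⟩ := mem_image.mp h
          have h1 : B i0 ⊆ S.sup B := Finset.le_sup hi0
          simp only [hf]
          apply union_subset (h1.trans subset_union_left)
          simp only [singleton_subset_iff, mem_union]
          exact Or.inr hy


lemma blocks_recover {k : ℕ} (hsk : s + 2 ≤ k)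
    (hBcard : ∀ i, (B i).card = k)
    (hBdisj : ∀ i j : Fin m, i ≠ j → Disjoint (B i) (B j))
    (hT : ∀ i, T i ⊆ B i) (hTcard : ∀ i, (T i).card = s)
    (S : Finset (Fin m)) (Y : Finset (Fin n))
    (hY : Y ⊆ ((univ : Finset (Fin m)).biUnion T) \ S.sup B) :
    univ.filter (fun i => B i ⊆ S.sup B ∪ Y) = S := by
  ext i
  simp only [mem_filter, mem_univ, true_and]
  constructor
  · intro hi
    by_contra hiS
    have hsub : B i ⊆ T i := by
      intro x hx
      rcases mem_union.mp (hi hx) with h | h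
      · obtain ⟨i', hi', hx'⟩ := Finset.mem_sup.mp h
        exact absurd hx (Finset.disjoint_left.mp
          (hBdisj i' i (fun he => hiS (he ▸ hi'))) hx')
      · obtain ⟨hT', _⟩ := mem_sdiff.mp (hY h)
        obtain ⟨i', _, hx'⟩ := mem_biUnion.mp hT'
        rcases eq_or_ne i' i with rfl | hne
        · exact hx'
        · exact absurd hx (Finset.disjoint_left.mp (hBdisj i' i hne) (hT i' hx'))
    have := Finset.card_le_card hsub
    rw [hBcard, hTcard] at this
    omega
  · intro hi
    exact (Finset.le_sup hi (α := Finset (Fin n))).trans subset_union_left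

lemma sdiff_card
    (hBdisj : ∀ i j : Fin m, i ≠ j → Disjoint (B i) (B j))
    (hT : ∀ i, T i ⊆ B i) (hTcard : ∀ i, (T i).card = s)
    (S : Finset (Fin m)) :
    ((((univ : Finset (Fin m)).biUnion T)) \ S.sup B).card = (m - S.card) * s := by
  have hTdisj : ∀ i j : Fin m, i ≠ j → Disjoint (T i) (T j) := fun i j hij =>
    (hBdisj i j hij).mono (hT i) (hT j)
  have heq : (((univ : Finset (Fin m)).biUnion T)) \ S.sup B = Sᶜ.biUnion T := by
    ext x
    simp only [mem_sdiff, mem_biUnion, mem_univ, true_and, mem_compl]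
    constructor
    · rintro ⟨⟨i, hx⟩, hns⟩
      refine ⟨i, fun hiS => hns ?_, hx⟩
      exact Finset.le_sup hiS (α := Finset (Fin n)) (hT i hx)
    · rintro ⟨i, hiS, hx⟩
      refine ⟨⟨i, hx⟩, fun hsup => ?_⟩
      obtain ⟨i', hi', hx'⟩ := Finset.mem_sup.mp hsup
      rcases eq_or_ne i' i with rfl | hne
      · exact hiS hi'
      · exact Finset.disjoint_right.mp (hBdisj i' i hne) (hT i hx) hx'
  rw [heq, Finset.card_biUnion (fun i _ j _ hij => hTdisj i j hij)]
  rw [Finset.sum_congr rfl (fun i _ => hTcard i), Finset.sum_const, smul_eq_mul,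
    Finset.card_compl, Fintype.card_fin]

lemma Nj_count {k : ℕ} (hs : 0 < s) (hsk : s + 2 ≤ k)
    (hBcard : ∀ i, (B i).card = k)
    (hBdisj : ∀ i j : Fin m, i ≠ j → Disjoint (B i) (B j))
    (hT : ∀ i, T i ⊆ B i) (hTcard : ∀ i, (T i).card = s)
    (j : ℕ) (hj : 1 ≤ j) :
    ((blockFamily B ((univ : Finset (Fin m)).biUnion T)).filter
      (fun A => (univ.filter (fun i : Fin m => B i ⊆ A)).card = j)).card
      = m.choose j * 2 ^ ((m - j) * s) := by
  set T' := (univ : Finset (Fin m)).biUnion T with hT'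
  have hset : (blockFamily B T').filter
      (fun A => (univ.filter (fun i : Fin m => B i ⊆ A)).card = j)
      = ((univ : Finset (Fin m)).powersetCard j).biUnion
        (fun S => ((T' \ S.sup B).powerset).image (fun Y => S.sup B ∪ Y)) := by
    ext A
    simp only [mem_filter, mem_biUnion, mem_powersetCard, mem_image, mem_powerset]
    constructor
    · rintro ⟨hA, hcard⟩
      obtain ⟨S, hSne, Y, hYsub, rfl⟩ := (mem_blockFamily_iff' B T hs hT hTcard A).mp hA
      rw [blocks_recover B T hsk hBcard hBdisj hT hTcard S Y hYsub] at hcard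
      exact ⟨S, ⟨subset_univ _, hcard⟩, Y, hYsub, rfl⟩
    · rintro ⟨S, ⟨_, hScard⟩, Y, hYsub, rfl⟩
      refine ⟨(mem_blockFamily_iff' B T hs hT hTcard _).mpr
        ⟨S, Finset.card_pos.mp (by omega), Y, hYsub, rfl⟩, ?_⟩
      rw [blocks_recover B T hsk hBcard hBdisj hT hTcard S Y hYsub, hScard]
  rw [hset, Finset.card_biUnion]
  · have hinner : ∀ S ∈ (univ : Finset (Fin m)).powersetCard j,
        (((T' \ S.sup B).powerset).image (fun Y => S.sup B ∪ Y)).card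
          = 2 ^ ((m - j) * s) := by
      intro S hS
      rw [Finset.card_image_of_injOn, Finset.card_powerset,
        sdiff_card B T hBdisj hT hTcard S, (mem_powersetCard.mp hS).2]
      intro Y1 h1 Y2 h2 he
      have d1 : Disjoint (S.sup B) Y1 := Finset.disjoint_right.mpr
        (fun x hx => (mem_sdiff.mp ((mem_powerset.mp h1) hx)).2)
      have d2 : Disjoint (S.sup B) Y2 := Finset.disjoint_right.mpr
        (fun x hx => (mem_sdiff.mp ((mem_powerset.mp h2) hx)).2)
      have he' : S.sup B ∪ Y1 = S.sup B ∪ Y2 := he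
      rw [← Finset.union_sdiff_cancel_left d1, ← Finset.union_sdiff_cancel_left d2, he']
    rw [Finset.sum_congr rfl hinner, Finset.sum_const, smul_eq_mul,
      Finset.card_powersetCard, Finset.card_fin]
  · intro S1 h1 S2 h2 hne
    rw [Function.onFun, Finset.disjoint_left]
    intro A hA1 hA2
    obtain ⟨Y1, hY1, rfl⟩ := mem_image.mp hA1
    obtain ⟨Y2, hY2, heq⟩ := mem_image.mp hA2
    apply hne
    rw [← blocks_recover B T hsk hBcard hBdisj hT hTcard S1 Y1
        (mem_powerset.mp hY1),
      ← blocks_recover B T hsk hBcard hBdisj hT hTcard S2 Y2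
        (mem_powerset.mp hY2), heq]

end Main

/-- In the block construction, with `p_j = N_j/|F|` and `τ = m · 2^{−s}`,
we have `p_j ≤ τ^{j−1} · p_1` for all `j ∈ [m]`. -/
theorem blockFamily_pj_le
    (k m s : ℕ) (hk : 0 < k) (hm : 2 ≤ m) (hs : 0 < s) (hsk : s + 2 ≤ k)
    (B : Fin m → Finset (Fin (k * m)))
    (hBcard : ∀ i, (B i).card = k)
    (hBdisj : ∀ i j : Fin m, i ≠ j → Disjoint (B i) (B j))
    (hBcover : (Finset.univ : Finset (Fin m)).biUnion B = (Finset.univ : Finset (Fin (k * m))))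
    (T : Fin m → Finset (Fin (k * m)))
    (hT : ∀ i, T i ⊆ B i) (hTcard : ∀ i, (T i).card = s)
    (N : ℕ → ℕ)
    (hN : ∀ j : ℕ, N j = ((blockFamily B ((univ : Finset (Fin m)).biUnion T)).filter
      (fun A => (univ.filter (fun i : Fin m => B i ⊆ A)).card = j)).card)
    (p : ℕ → ℝ)
    (hp : ∀ j : ℕ, p j = (N j : ℝ) / ((blockFamily B ((univ : Finset (Fin m)).biUnion T)).card : ℝ))
    (τ : ℝ) (hτ : τ = (m : ℝ) * (2 : ℝ) ^ (-(s : ℤ))) :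
    ∀ j : ℕ, 1 ≤ j → j ≤ m → p j ≤ τ ^ (j - 1) * p 1 := by
  intro j hj hjm
  have hNj : N j = m.choose j * 2 ^ ((m - j) * s) := by
    rw [hN j, Nj_count B T hs hsk hBcard hBdisj hT hTcard j hj]
  have hN1 : N 1 = m * 2 ^ ((m - 1) * s) := by
    rw [hN 1, Nj_count B T hs hsk hBcard hBdisj hT hTcard 1 le_rfl, Nat.choose_one_right]
  -- nonemptiness of the family
  have hFne : (blockFamily B ((univ : Finset (Fin m)).biUnion T)).Nonempty := by
    refine ⟨B ⟨0, by omega⟩ ∪ ∅, (mem_blockFamily_iff' B T hs hT hTcard _).mpr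
      ⟨{⟨0, by omega⟩}, singleton_nonempty _, ∅, empty_subset _, ?_⟩⟩
    rw [Finset.sup_singleton]
  have hcpos : (0 : ℝ) < ((blockFamily B ((univ : Finset (Fin m)).biUnion T)).card : ℝ) := by
    exact_mod_cast Finset.card_pos.mpr hFne
  -- the key nat inequality
  have hnat : m.choose j * 2 ^ ((m - j) * s) * 2 ^ (s * (j - 1))
      ≤ m ^ (j - 1) * (m * 2 ^ ((m - 1) * s)) := by
    have he : (m - j) * s + s * (j - 1) = (m - 1) * s := by
      have h1 : (m - j) + (j - 1) = m - 1 := by omega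
      calc (m - j) * s + s * (j - 1) = ((m - j) + (j - 1)) * s := by ring
      _ = (m - 1) * s := by rw [h1]
    have hch : m.choose j ≤ m ^ (j - 1) * m := by
      have := Nat.choose_le_pow m j
      have hpow : m ^ j = m ^ (j - 1) * m := by
        rw [← pow_succ]
        congr 1
        omega
      omega
    calc m.choose j * 2 ^ ((m - j) * s) * 2 ^ (s * (j - 1))
        = m.choose j * 2 ^ ((m - j) * s + s * (j - 1)) := by rw [pow_add]; ring
      _ = m.choose j * 2 ^ ((m - 1) * s) := by rw [he]
      _ ≤ (m ^ (j - 1) * m) * 2 ^ ((m - 1) * s) :=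
          Nat.mul_le_mul_right _ hch
      _ = m ^ (j - 1) * (m * 2 ^ ((m - 1) * s)) := by ring
  -- real inequality on counts
  have h2pos : (0 : ℝ) < 2 ^ (s * (j - 1)) := by positivity
  have hkey : (N j : ℝ) ≤ τ ^ (j - 1) * (N 1 : ℝ) := by
    have hτ' : τ = (m : ℝ) * ((2 : ℝ) ^ s)⁻¹ := by
      rw [hτ, zpow_neg, zpow_natCast]
    rw [hτ', mul_pow, inv_pow, ← pow_mul,
      show (m : ℝ) ^ (j - 1) * ((2 : ℝ) ^ (s * (j - 1)))⁻¹ * (N 1 : ℝ)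
        = ((m : ℝ) ^ (j - 1) * (N 1 : ℝ)) / 2 ^ (s * (j - 1)) from by ring,
      le_div_iff₀ h2pos]
    rw [hNj, hN1]
    exact_mod_cast hnat
  rw [hp j, hp 1, mul_div_assoc']
  exact div_le_div_of_nonneg_right hkey hcpos.le |>.trans_eq rfl
end

section
/- In the block construction, if additionally m · 2^{−s} ≤ 1/4, then m · 2^{(m−1)s} ≤ |F| ≤ 2m · 2^{(m−1)s}. -/
open Finset

lemma mem_blockFamily_iff_s15 {n m : ℕ} (B : Fin m → Finset (Fin n)) (T : Finset (Fin n))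
    (hTm : ∀ i, (T ∩ B i).Nonempty) {C : Finset (Fin n)} :
    C ∈ blockFamily B T ↔
      ∃ I : Finset (Fin m), I.Nonempty ∧ ∃ S ⊆ T, C = I.biUnion B ∪ S := by
  constructor
  · intro h
    simp only [blockFamily, mem_image, mem_filter, mem_powerset] at h
    obtain ⟨Q, ⟨hQsub, hQne⟩, hQ⟩ := h
    set gen : Fin m × Fin n → Finset (Fin n) := fun p => B p.1 ∪ {p.2} with hgen
    set P : Finset (Fin m × Fin n) := (univ ×ˢ T).filter (fun p => gen p ∈ Q) with hP
    have hQP : Q = P.image gen := by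
      ext q
      simp only [hP, mem_image, mem_filter]
      constructor
      · intro hq
        obtain ⟨p, hp, rfl⟩ := mem_image.1 (hQsub hq)
        exact ⟨p, ⟨hp, hq⟩, rfl⟩
      · rintro ⟨p, ⟨_, hq⟩, rfl⟩; exact hq
    have hPne : P.Nonempty := Finset.image_nonempty.1 (hQP ▸ hQne)
    refine ⟨P.image Prod.fst, hPne.image _, P.image Prod.snd, ?_, ?_⟩
    · intro x hx
      obtain ⟨p, hp, rfl⟩ := mem_image.1 hx
      exact (Finset.mem_product.1 (mem_filter.1 hp).1).2
    · rw [← hQ, hQP, Finset.sup_image]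
      ext x
      simp only [Finset.mem_sup, Function.comp, id, mem_union, mem_biUnion, mem_image,
        mem_singleton, hgen]
      constructor
      · rintro ⟨p, hp, hx | rfl⟩
        · exact Or.inl ⟨p.1, ⟨p, hp, rfl⟩, hx⟩
        · exact Or.inr ⟨p, hp, rfl⟩
      · rintro (⟨i, ⟨p, hp, rfl⟩, hx⟩ | ⟨p, hp, rfl⟩)
        · exact ⟨p, hp, Or.inl hx⟩
        · exact ⟨p, hp, Or.inr rfl⟩
  · rintro ⟨I, ⟨i₀, hi₀⟩, S, hST, rfl⟩
    set gen : Fin m × Fin n → Finset (Fin n) := fun p => B p.1 ∪ {p.2} with hgen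
    set P : Finset (Fin m × Fin n) :=
      I.biUnion (fun i => {i} ×ˢ (T ∩ B i)) ∪ ({i₀} ×ˢ S) with hP
    have hPmem : ∀ p : Fin m × Fin n,
        p ∈ P ↔ (p.1 ∈ I ∧ p.2 ∈ T ∩ B p.1) ∨ (p.1 = i₀ ∧ p.2 ∈ S) := by
      intro p
      simp only [hP, mem_union, mem_biUnion, Finset.mem_product, mem_singleton]
      constructor
      · rintro (⟨i, hi, rfl, h2⟩ | ⟨h1, h2⟩)
        · exact Or.inl ⟨hi, h2⟩
        · exact Or.inr ⟨h1, h2⟩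
      · rintro (⟨h1, h2⟩ | ⟨h1, h2⟩)
        · exact Or.inl ⟨p.1, h1, rfl, h2⟩
        · exact Or.inr ⟨h1, h2⟩
    have hPsub : P ⊆ univ ×ˢ T := by
      intro p hp
      rw [Finset.mem_product]
      rcases (hPmem p).1 hp with ⟨_, h2⟩ | ⟨_, h2⟩
      · exact ⟨mem_univ _, (mem_inter.1 h2).1⟩
      · exact ⟨mem_univ _, hST h2⟩
    have hPne : P.Nonempty := by
      obtain ⟨t, ht⟩ := hTm i₀
      exact ⟨(i₀, t), (hPmem _).2 (Or.inl ⟨hi₀, ht⟩)⟩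
    simp only [blockFamily, mem_image, mem_filter, mem_powerset]
    refine ⟨P.image gen, ⟨Finset.image_subset_image hPsub, hPne.image _⟩, ?_⟩
    rw [Finset.sup_image]
    ext x
    simp only [Finset.mem_sup, Function.comp, id, mem_union, mem_biUnion, mem_singleton, hgen]
    constructor
    · rintro ⟨p, hp, hx | rfl⟩
      · rcases (hPmem p).1 hp with ⟨h1, _⟩ | ⟨h1, _⟩
        · exact Or.inl ⟨p.1, h1, hx⟩
        · exact Or.inl ⟨i₀, hi₀, h1 ▸ hx⟩
      · rcases (hPmem p).1 hp with ⟨h1, h2⟩ | ⟨_, h2⟩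
        · exact Or.inl ⟨p.1, h1, (mem_inter.1 h2).2⟩
        · exact Or.inr h2
    · rintro (⟨i, hi, hx⟩ | hx)
      · obtain ⟨t, ht⟩ := hTm i
        exact ⟨(i, t), (hPmem _).2 (Or.inl ⟨hi, ht⟩), Or.inl hx⟩
      · exact ⟨(i₀, x), (hPmem _).2 (Or.inr ⟨rfl, hx⟩), Or.inr rfl⟩

lemma pow_one_add_le (x : ℝ) (hx : 0 ≤ x) :
    ∀ M : ℕ, (M : ℝ) * x ≤ 1/4 → (1+x)^M ≤ 1 + 2*M*x := by
  intro M
  induction M with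
  | zero => intro _; norm_num
  | succ M ih =>
    intro h
    have hM : (M : ℝ) * x ≤ 1/4 := by
      refine le_trans ?_ h
      have : (M:ℝ) ≤ (M+1:ℕ) := by push_cast; linarith
      nlinarith
    have h1 := ih hM
    have h2 : (1+x)^(M+1) = (1+x)^M * (1+x) := by ring
    have hMx : 2 * (M:ℝ) * x ≤ 1/2 := by
      have : ((M+1:ℕ):ℝ) * x ≤ 1/4 := h
      push_cast at this
      nlinarith
    push_cast
    nlinarith [pow_nonneg (by linarith : (0:ℝ) ≤ 1+x) M]

lemma sum_powerset_pow (m s : ℕ) :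
    ∑ I ∈ (univ : Finset (Fin m)).powerset, 2^((m - I.card)*s) = (2^s+1)^m := by
  have h := Finset.prod_add (fun _ : Fin m => (1:ℕ)) (fun _ : Fin m => 2^s) univ
  simp only [Finset.prod_const, one_pow, one_mul, card_univ, Fintype.card_fin] at h
  rw [add_comm (1:ℕ)] at h
  rw [h]
  apply Finset.sum_congr rfl
  intro I hI
  rw [Finset.card_sdiff_of_subset (mem_powerset.1 hI), card_univ, Fintype.card_fin, ← pow_mul,
    mul_comm s]

/-- In the block construction, if `m · 2^{−s} ≤ 1/4`, then
`m · 2^{(m−1)s} ≤ |F| ≤ 2m · 2^{(m−1)s}`. -/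
theorem blockFamily_card_bounds
    (k m s : ℕ) (hk : 0 < k) (hm : 2 ≤ m) (hs : 0 < s) (hsk : s + 2 ≤ k)
    (B : Fin m → Finset (Fin (k * m)))
    (hBcard : ∀ i, (B i).card = k)
    (hBdisj : ∀ i j : Fin m, i ≠ j → Disjoint (B i) (B j))
    (hBcover : (Finset.univ : Finset (Fin m)).biUnion B = (Finset.univ : Finset (Fin (k * m))))
    (T : Fin m → Finset (Fin (k * m)))
    (hT : ∀ i, T i ⊆ B i) (hTcard : ∀ i, (T i).card = s)
    (hτ : (m : ℝ) * (2 : ℝ) ^ (-(s : ℤ)) ≤ 1 / 4) :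
    m * 2 ^ ((m - 1) * s) ≤ (blockFamily B ((univ : Finset (Fin m)).biUnion T)).card ∧
    (blockFamily B ((univ : Finset (Fin m)).biUnion T)).card ≤ 2 * m * 2 ^ ((m - 1) * s) := by
  set 𝒯 : Finset (Fin (k*m)) := (univ : Finset (Fin m)).biUnion T with h𝒯
  have hTdisj : ∀ i j : Fin m, i ≠ j → Disjoint (T i) (T j) :=
    fun i j hij => (hBdisj i j hij).mono (hT i) (hT j)
  have hTne : ∀ i, (T i).Nonempty := fun i => Finset.card_pos.mp (by rw [hTcard i]; exact hs)
  have hTBi : ∀ j, 𝒯 ∩ B j = T j := by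
    intro j
    ext x
    simp only [h𝒯, mem_inter, mem_biUnion, mem_univ, true_and]
    constructor
    · rintro ⟨⟨i, hxi⟩, hxB⟩
      rcases eq_or_ne i j with rfl | hij
      · exact hxi
      · exact absurd hxB (Finset.disjoint_left.mp (hBdisj i j hij) (hT i hxi))
    · intro hx
      exact ⟨⟨j, hx⟩, hT j hx⟩
  have hTm : ∀ i, (𝒯 ∩ B i).Nonempty := fun i => by rw [hTBi i]; exact hTne i
  have hcardBi : ∀ I : Finset (Fin m), ((univ \ I).biUnion T).card = (m - I.card) * s := by
    intro I
    rw [Finset.card_biUnion (fun i _ j _ hij => hTdisj i j hij),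
      Finset.sum_congr rfl (fun i _ => hTcard i), Finset.sum_const, smul_eq_mul,
      Finset.card_sdiff_of_subset (subset_univ I), card_univ, Fintype.card_fin]
  have hsub𝒯 : ∀ I : Finset (Fin m), (univ \ I).biUnion T ⊆ 𝒯 := by
    intro I x hx
    obtain ⟨j, _, hxj⟩ := mem_biUnion.1 hx
    exact mem_biUnion.2 ⟨j, mem_univ _, hxj⟩
  have hmem := fun C => mem_blockFamily_iff_s15 B 𝒯 hTm (C := C)
  constructor
  · -- lower bound
    set Src := (univ : Finset (Fin m)).sigma
      (fun i => (((univ : Finset (Fin m)) \ {i}).biUnion T).powerset) with hSrcdef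
    have hSrc : Src.card = m * 2 ^ ((m - 1) * s) := by
      rw [Finset.card_sigma]
      have : ∀ i : Fin m, ((((univ : Finset (Fin m)) \ {i}).biUnion T).powerset).card
          = 2 ^ ((m - 1) * s) := by
        intro i
        rw [card_powerset, hcardBi {i}, card_singleton]
      rw [Finset.sum_congr rfl (fun i _ => this i), Finset.sum_const, smul_eq_mul,
        card_univ, Fintype.card_fin]
    rw [← hSrc]
    apply Finset.card_le_card_of_injOn (fun p => B p.1 ∪ p.2)
    · rintro ⟨i, S⟩ hp
      rw [Finset.mem_coe, Finset.mem_sigma] at hp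
      have hS := mem_powerset.1 hp.2
      refine (hmem _).2 ⟨{i}, singleton_nonempty i, S, (hS.trans (hsub𝒯 _)), ?_⟩
      rw [Finset.singleton_biUnion]
    · rintro ⟨i, S⟩ ha ⟨i', S'⟩ hb heq
      have haS : S ⊆ ((univ : Finset (Fin m)) \ {i}).biUnion T :=
        mem_powerset.1 (Finset.mem_sigma.1 (Finset.mem_coe.1 ha)).2
      have hbS : S' ⊆ ((univ : Finset (Fin m)) \ {i'}).biUnion T :=
        mem_powerset.1 (Finset.mem_sigma.1 (Finset.mem_coe.1 hb)).2
      simp only at heq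
      have hdisjS : ∀ (j : Fin m) (S₀ : Finset (Fin (k*m))),
          S₀ ⊆ ((univ : Finset (Fin m)) \ {j}).biUnion T → Disjoint (B j) S₀ := by
        intro j S₀ hS₀
        rw [Finset.disjoint_right]
        intro x hx
        obtain ⟨l, hl, hxl⟩ := mem_biUnion.1 (hS₀ hx)
        have hlj : l ≠ j := by
          simp only [mem_sdiff, mem_singleton] at hl
          exact hl.2
        exact Finset.disjoint_left.mp (hBdisj l j hlj) (hT l hxl)
      obtain rfl : i = i' := by
        by_contra hii
        have hBS : B i' ⊆ S := by
          intro x hx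
          have hx' : x ∈ B i ∪ S := by rw [heq]; exact mem_union_left _ hx
          rcases mem_union.1 hx' with h | h
          · exact absurd hx (Finset.disjoint_left.mp (hBdisj i i' hii) h)
          · exact h
        have hBT : B i' ⊆ T i' := by
          intro x hx
          rw [← hTBi i']
          exact mem_inter.2 ⟨hsub𝒯 _ (haS (hBS hx)), hx⟩
        have := Finset.card_le_card hBT
        rw [hBcard, hTcard] at this
        omega
      obtain rfl : S = S' := by
        have hd := hdisjS i S haS
        have hd' := hdisjS i S' hbS
        ext x
        constructor
        · intro hx
          have hx' : x ∈ B i ∪ S' := by rw [← heq]; exact mem_union_right _ hx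
          rcases mem_union.1 hx' with h | h
          · exact absurd hx (Finset.disjoint_left.mp hd h)
          · exact h
        · intro hx
          have hx' : x ∈ B i ∪ S := by rw [heq]; exact mem_union_right _ hx
          rcases mem_union.1 hx' with h | h
          · exact absurd hx (Finset.disjoint_left.mp hd' h)
          · exact h
      rfl
  · -- upper bound
    set Tgt := ((univ : Finset (Fin m)).powerset.filter Finset.Nonempty).sigma
      (fun I => (((univ : Finset (Fin m)) \ I).biUnion T).powerset) with hTgtdef
    have hTgt : Tgt.card = ∑ I ∈ (univ : Finset (Fin m)).powerset.filter Finset.Nonempty,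
        2 ^ ((m - I.card) * s) := by
      rw [Finset.card_sigma]
      exact Finset.sum_congr rfl (fun I _ => by rw [card_powerset, hcardBi I])
    have hfe : (univ : Finset (Fin m)).powerset.filter Finset.Nonempty
        = (univ : Finset (Fin m)).powerset.erase ∅ := by
      ext J
      simp [Finset.nonempty_iff_ne_empty, and_comm]
    have hsum : 2 ^ (m * s) + Tgt.card = (2 ^ s + 1) ^ m := by
      rw [hTgt, hfe, ← sum_powerset_pow m s,
        ← Finset.add_sum_erase _ _ (mem_powerset.2 (empty_subset (univ : Finset (Fin m))))]
      simp
    have hup : (blockFamily B 𝒯).card ≤ Tgt.card := by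
      apply Finset.card_le_card_of_injOn
        (fun C => (⟨univ.filter (fun i => B i ⊆ C),
          C \ (univ.filter (fun i => B i ⊆ C)).biUnion B⟩ :
          Σ _ : Finset (Fin m), Finset (Fin (k*m))))
      · intro C hC
        obtain ⟨I₀, ⟨i₀, hi₀⟩, S₀, hS₀, hCeq⟩ := (hmem C).1 hC
        have hBIsub : ∀ i ∈ I₀, B i ⊆ C := by
          intro i hi x hx
          rw [hCeq]
          exact mem_union_left _ (mem_biUnion.2 ⟨i, hi, hx⟩)
        rw [Finset.mem_coe, Finset.mem_sigma]
        constructor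
        · rw [mem_filter, mem_powerset]
          exact ⟨subset_univ _, ⟨i₀, mem_filter.2 ⟨mem_univ _, hBIsub i₀ hi₀⟩⟩⟩
        · rw [mem_powerset]
          intro x hx
          obtain ⟨hxC, hxn⟩ := mem_sdiff.1 hx
          have hxC' := hxC
          rw [hCeq] at hxC'
          rcases mem_union.1 hxC' with h | h
          · obtain ⟨i, hi, hxi⟩ := mem_biUnion.1 h
            exact absurd (mem_biUnion.2 ⟨i,
              mem_filter.2 ⟨mem_univ _, hBIsub i hi⟩, hxi⟩) hxn
          · obtain ⟨j, _, hxj⟩ := mem_biUnion.1 (hS₀ h)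
            have hjn : j ∉ univ.filter (fun i => B i ⊆ C) := by
              intro hj
              exact hxn (mem_biUnion.2 ⟨j, hj, hT j hxj⟩)
            exact mem_biUnion.2 ⟨j, mem_sdiff.2 ⟨mem_univ _, hjn⟩, hxj⟩
      · intro C hC C' hC' h
        have hrec : ∀ D : Finset (Fin (k*m)),
            D = (univ.filter (fun i => B i ⊆ D)).biUnion B
              ∪ (D \ (univ.filter (fun i => B i ⊆ D)).biUnion B) := by
          intro D
          have hsub : (univ.filter (fun i => B i ⊆ D)).biUnion B ⊆ D := by
            intro x hx
            obtain ⟨i, hi, hxi⟩ := mem_biUnion.1 hx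
            exact (mem_filter.1 hi).2 hxi
          rw [Finset.union_sdiff_of_subset hsub]
        have h1 : univ.filter (fun i => B i ⊆ C) = univ.filter (fun i => B i ⊆ C') :=
          congrArg Sigma.fst h
        have h2 : C \ (univ.filter (fun i => B i ⊆ C)).biUnion B
            = C' \ (univ.filter (fun i => B i ⊆ C')).biUnion B :=
          congrArg Sigma.snd h
        calc C = (univ.filter (fun i => B i ⊆ C)).biUnion B
              ∪ (C \ (univ.filter (fun i => B i ⊆ C)).biUnion B) := hrec C
          _ = (univ.filter (fun i => B i ⊆ C')).biUnion B
              ∪ (C' \ (univ.filter (fun i => B i ⊆ C')).biUnion B) := by rw [h2, h1]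
          _ = C' := (hrec C').symm
    have key : (2 ^ s + 1) ^ m ≤ 2 * m * 2 ^ ((m - 1) * s) + 2 ^ (m * s) := by
      have hm1 : m - 1 + 1 = m := Nat.sub_add_cancel (le_trans one_le_two hm)
      have hx : (0:ℝ) ≤ ((2:ℝ) ^ s)⁻¹ := by positivity
      have hτ' : (m:ℝ) * ((2:ℝ) ^ s)⁻¹ ≤ 1/4 := by
        rwa [zpow_neg, zpow_natCast] at hτ
      have hp := pow_one_add_le _ hx m hτ'
      have h2s : (0:ℝ) < 2 ^ s := by positivity
      have e1 : ((2:ℝ) ^ s + 1) = 2 ^ s * (1 + ((2:ℝ) ^ s)⁻¹) := by field_simp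
      have e2 : ((2:ℝ) ^ s) ^ m = ((2:ℝ) ^ s) ^ (m - 1) * 2 ^ s := by
        rw [← pow_succ, hm1]
      have hreal : ((2:ℝ) ^ s + 1) ^ m ≤ 2 * m * (2:ℝ) ^ ((m - 1) * s) + 2 ^ (m * s) := by
        calc ((2:ℝ) ^ s + 1) ^ m = (2 ^ s) ^ m * (1 + ((2:ℝ) ^ s)⁻¹) ^ m := by
              rw [e1, mul_pow]
          _ ≤ (2 ^ s) ^ m * (1 + 2 * m * ((2:ℝ) ^ s)⁻¹) := by
              apply mul_le_mul_of_nonneg_left hp (le_of_lt (pow_pos h2s m))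
          _ ≤ 2 * m * (2:ℝ) ^ ((m - 1) * s) + 2 ^ (m * s) := by
              have e3 : (2:ℝ) ^ ((m - 1) * s) = ((2:ℝ) ^ s) ^ (m - 1) := by
                rw [mul_comm, pow_mul]
              have e4 : (2:ℝ) ^ (m * s) = ((2:ℝ) ^ s) ^ m := by
                rw [mul_comm, pow_mul]
              rw [e3, e4, e2]
              have e5 : ((2:ℝ) ^ s) ^ (m - 1) * 2 ^ s * (2 ^ s)⁻¹
                  = ((2:ℝ) ^ s) ^ (m - 1) := by field_simp
              nlinarith [pow_pos h2s (m - 1)]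
      exact_mod_cast hreal
    omega
end
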